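/- The β^k-indicator is monotone under inclusion of input sets: if S ⊆ R ⊆ {1,...,n}, then β^k_S ≤ β^k_R. -/

import Mathlib

open MeasureTheory
open scoped RealInnerProductSpace

/-- Conditional Jensen in L²: the conditional expectation contracts second moments. -/
lemma condexp_memLp_two_and_integral_norm_sq_le
    {Ω H : Type*} [m0 : MeasurableSpace Ω]
    [NormedAddCommGroup H] [InnerProductSpace ℝ H] [CompleteSpace H]
    (μ : Measure Ω) [IsFiniteMeasure μ] {Z : Ω → H} (hZmem : MemLp Z 2 μ)
    {m : MeasurableSpace Ω} (hm : m ≤ m0) :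
    MemLp (μ[Z|m]) 2 μ ∧
      (∫ ω, ‖(μ[Z|m]) ω‖ ^ 2 ∂μ) ≤ ∫ ω, ‖Z ω‖ ^ 2 ∂μ := by
  haveI : SigmaFinite (μ.trim hm) := inferInstance
  letI _i : MeasurableSpace Ω := m0
  set f : Lp H 2 μ := hZmem.toLp Z with hf
  set g : Lp H 2 μ := (condExpL2 H ℝ hm f : Lp H 2 μ) with hg
  have hfZ : (f : Ω → H) =ᵐ[μ] Z := hZmem.coeFn_toLp
  have hgae : (g : Ω → H) =ᵐ[μ] μ[Z|m] := by
    refine ae_eq_condExp_of_forall_setIntegral_eq hm (hZmem.integrable one_le_two) ?_ ?_ ?_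
    · intro s _ _
      exact (integrable_condExpL2_of_isFiniteMeasure hm).integrableOn
    · intro s hs hμs
      rw [integral_condExpL2_eq hm f hs hμs.ne]
      exact setIntegral_congr_ae (hm s hs) (hfZ.mono fun x hx _ => hx)
    · exact aestronglyMeasurable_condExpL2 hm f
  have hmem : MemLp (μ[Z|m]) 2 μ := (memLp_congr_ae hgae).mp (Lp.memLp g)
  refine ⟨hmem, ?_⟩
  have hint_g : (∫ ω, ‖(μ[Z|m]) ω‖ ^ 2 ∂μ) = ‖g‖ ^ 2 := by
    rw [← real_inner_self_eq_norm_sq, L2.inner_def]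
    refine (integral_congr_ae ?_).symm
    filter_upwards [hgae] with ω hω
    rw [hω, real_inner_self_eq_norm_sq]
  have hint_f : (∫ ω, ‖Z ω‖ ^ 2 ∂μ) = ‖f‖ ^ 2 := by
    rw [← real_inner_self_eq_norm_sq, L2.inner_def]
    refine (integral_congr_ae ?_).symm
    filter_upwards [hfZ] with ω hω
    rw [hω, real_inner_self_eq_norm_sq]
  rw [hint_g, hint_f]
  have hnorm : ‖g‖ ≤ ‖f‖ := norm_condExpL2_le (𝕜 := ℝ) hm f
  exact pow_le_pow_left₀ (norm_nonneg _) hnorm 2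

/-- The β^k-indicator of the group of inputs with σ-algebra `m`:
`β^k_R = (E[‖μ_{Y|X_R}‖²] − ‖μ_Y‖²) / (E[k(Y,Y)] − ‖μ_Y‖²)`, where `Z ω = k(·,Y(ω))`
is the output feature map and `μ[Z|m]` the conditional mean embedding of `Y`
given the inputs generating `m`. -/
noncomputable def betaIndicator {Ω H : Type*} (m0 : MeasurableSpace Ω)
    [NormedAddCommGroup H] [InnerProductSpace ℝ H] [CompleteSpace H]
    (μ : @MeasureTheory.Measure Ω m0) (Z : Ω → H) (m : MeasurableSpace Ω) : ℝ :=
  ((∫ ω, ‖(μ[Z|m]) ω‖ ^ 2 ∂μ) - ‖∫ ω', Z ω' ∂μ‖ ^ 2) /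
    ((∫ ω, ‖Z ω‖ ^ 2 ∂μ) - ‖∫ ω', Z ω' ∂μ‖ ^ 2)

/-- **Monotonicity of the β^k-indicator under inclusion of input sets.**
If `S ⊆ R` then the σ-algebra `m₁` generated by `X_S` is contained in the σ-algebra
`m₂` generated by `X_R`, and `β^k_S ≤ β^k_R`.  (Conditional Jensen:
`E[‖E[Z|m₁]‖²] ≤ E[‖E[Z|m₂]‖²]` for `m₁ ≤ m₂` and `Z = k(·,Y)` Bochner-integrable;
the common denominator `E[k(Y,Y)] − ‖μ_Y‖²` is assumed positive.) -/
theorem betaIndicator_mono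
    {Ω H : Type*} [m0 : MeasurableSpace Ω]
    [NormedAddCommGroup H] [InnerProductSpace ℝ H] [CompleteSpace H]
    (μ : Measure Ω) [IsProbabilityMeasure μ]
    (Z : Ω → H) (hZ : Integrable Z μ)
    (hZ2 : Integrable (fun ω => ‖Z ω‖ ^ 2) μ)
    (hden : 0 < (∫ ω, ‖Z ω‖ ^ 2 ∂μ) - ‖∫ ω', Z ω' ∂μ‖ ^ 2)
    (m₁ m₂ : MeasurableSpace Ω) (h12 : m₁ ≤ m₂) (h2 : m₂ ≤ m0) :
    betaIndicator m0 μ Z m₁ ≤ betaIndicator m0 μ Z m₂ := by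
  have h1 : m₁ ≤ m0 := h12.trans h2
  letI _i : MeasurableSpace Ω := m0
  haveI : SigmaFinite (μ.trim h2) := inferInstance
  have hZmem : MemLp Z 2 μ :=
    (memLp_two_iff_integrable_sq_norm hZ.aestronglyMeasurable).mpr hZ2
  obtain ⟨hWmem, _⟩ := condexp_memLp_two_and_integral_norm_sq_le μ hZmem h2
  obtain ⟨_, hle⟩ := condexp_memLp_two_and_integral_norm_sq_le μ hWmem h1
  have htower : μ[μ[Z|m₂]|m₁] =ᵐ[μ] μ[Z|m₁] := condExp_condExp_of_le h12 h2
  have hnum : (∫ ω, ‖(μ[Z|m₁]) ω‖ ^ 2 ∂μ) ≤ ∫ ω, ‖(μ[Z|m₂]) ω‖ ^ 2 ∂μ := by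
    calc (∫ ω, ‖(μ[Z|m₁]) ω‖ ^ 2 ∂μ)
        = ∫ ω, ‖(μ[μ[Z|m₂]|m₁]) ω‖ ^ 2 ∂μ := by
          refine integral_congr_ae ?_
          filter_upwards [htower] with ω hω
          rw [hω]
      _ ≤ ∫ ω, ‖(μ[Z|m₂]) ω‖ ^ 2 ∂μ := hle
  unfold betaIndicator
  gcongr
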